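/- Each generator i₁, p₀₁, p₁₂, h of the group 𝔊 preserves the linear form a₁+a₅+a₇+a₈−a₂−a₃, i.e. composing this linear form with any of the generators yields the same linear form. -/
import Mathlib


def i1 (a : Fin 8 → ℤ) : Fin 8 → ℤ :=
  ![a 4, a 3, a 2, a 1, a 0, a 6, a 5, -a 1 + a 3 - a 5 + a 6 + a 7]

def p01 (a : Fin 8 → ℤ) : Fin 8 → ℤ :=
  ![a 0, a 1, -a 1 + a 3 + a 4, a 1 + a 2 - a 4, a 4, a 5, a 6,
    -a 1 - a 2 + a 3 + a 4 + a 7]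

def p12 (a : Fin 8 → ℤ) : Fin 8 → ℤ :=
  ![a 0, a 1, -a 1 + a 3 + a 7, a 1 + a 2 - a 7, -a 1 - a 2 + a 3 + a 4 + a 7,
    a 1 + a 2 - a 3 + a 5 - a 7, a 6, a 7]

def hmap (a : Fin 8 → ℤ) : Fin 8 → ℤ :=
  ![a 0, a 1, a 2 + a 5 - a 7, a 3 - a 5 + a 7, a 4 + a 5 - a 7, a 7,
    -a 5 + a 6 + a 7, a 5]

/-- The exceptional linear form `a₁+a₅+a₇+a₈−a₂−a₃`. -/
def excForm (a : Fin 8 → ℤ) : ℤ := a 0 + a 4 + a 6 + a 7 - a 1 - a 2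

theorem generators_preserve_exceptional_form :
    ∀ g ∈ [i1, p01, p12, hmap], ∀ a : Fin 8 → ℤ, excForm (g a) = excForm a := by
  intro g hg a
  fin_cases hg
  · show a 4 + a 0 + a 5 + (-a 1 + a 3 - a 5 + a 6 + a 7) - a 3 - a 2
        = a 0 + a 4 + a 6 + a 7 - a 1 - a 2
    ring
  · show a 0 + a 4 + a 6 + (-a 1 - a 2 + a 3 + a 4 + a 7) - a 1 - (-a 1 + a 3 + a 4)
        = a 0 + a 4 + a 6 + a 7 - a 1 - a 2
    ring
  · show a 0 + (-a 1 - a 2 + a 3 + a 4 + a 7) + a 6 + a 7 - a 1 - (-a 1 + a 3 + a 7)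
        = a 0 + a 4 + a 6 + a 7 - a 1 - a 2
    ring
  · show a 0 + (a 4 + a 5 - a 7) + (-a 5 + a 6 + a 7) + a 5 - a 1 - (a 2 + a 5 - a 7)
        = a 0 + a 4 + a 6 + a 7 - a 1 - a 2
    ring
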